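/- arXiv:2501.17027 — 3 statements merged into one kernel-verified Lean document; each statement's English description precedes it below -/
import Mathlib

section
/- Let S be a scheme, X an S-scheme, Γ a finite group, and ρ : Γ → Aut_S(X) an action of Γ on X by S-automorphisms. Then the fixed-point functor X^Γ, sending an S-scheme T to the set of S-morphisms f : T → X satisfying ρ(γ) ∘ f = f for all γ ∈ Γ, is representable by an S-scheme X^Γ. Moreover, if X is an affine scheme then the representing scheme X^Γ is affine. -/
open CategoryTheory AlgebraicGeometry Opposite

/-- The fixed-point functor of an action `ρ : Γ →* Aut X` of a group `Γ` on an object `X` of a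
category `C`: it sends `T` to the set of morphisms `f : T ⟶ X` fixed by postcomposition with
the action, i.e. `ρ γ ∘ f = f` for all `γ`. -/
def fixedFunctor {C : Type*} [Category C] {Γ : Type*} [Group Γ] {X : C}
    (ρ : Γ →* Aut X) : Cᵒᵖ ⥤ Type _ where
  obj T := {f : T.unop ⟶ X // ∀ γ : Γ, f ≫ (ρ γ).hom = f}
  map h := TypeCat.ofHom fun f => ⟨h.unop ≫ f.1, fun γ => by rw [Category.assoc, f.2 γ]⟩
  map_id T := by
    ext f
    exact Category.id_comp f.1
  map_comp h h' := by
    ext f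
    exact Category.assoc _ _ _

section Aux

open CategoryTheory.Limits

variable {S : Scheme} {X : Over S} {Γ : Type} [Group Γ] (ρ : Γ →* Aut X)

/-- Iterated equalizer along a list of group elements: `E ρ l` is the subobject of `X`
(with its structure monomorphism to `X`) on which `ρ γ` acts trivially for all `γ ∈ l`. -/
noncomputable def E : List Γ → Σ' Z : Over S, Z ⟶ X
  | [] => ⟨X, 𝟙 X⟩
  | γ :: l => ⟨equalizer (E l).2 ((E l).2 ≫ (ρ γ).hom),
      equalizer.ι (E l).2 ((E l).2 ≫ (ρ γ).hom) ≫ (E l).2⟩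

lemma E_mono (l : List Γ) : Mono (E ρ l).2 := by
  induction l with
  | nil => exact inferInstanceAs (Mono (𝟙 X))
  | cons γ l ih => exact @mono_comp _ _ _ _ _ _ (equalizer.ι_mono) _ ih

lemma E_fixed (l : List Γ) : ∀ γ ∈ l, (E ρ l).2 ≫ (ρ γ).hom = (E ρ l).2 := by
  induction l with
  | nil => intro γ h; simp at h
  | cons γ l ih =>
    intro γ' h
    rcases List.mem_cons.mp h with h | h
    · subst h
      show (equalizer.ι _ _ ≫ (E ρ l).2) ≫ (ρ γ').hom = _
      rw [Category.assoc, ← equalizer.condition]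
      rfl
    · show (equalizer.ι _ _ ≫ (E ρ l).2) ≫ (ρ γ').hom = equalizer.ι _ _ ≫ (E ρ l).2
      rw [Category.assoc, ih γ' h]

lemma E_lift (l : List Γ) {T : Over S} (f : T ⟶ X)
    (h : ∀ γ ∈ l, f ≫ (ρ γ).hom = f) : ∃ k : T ⟶ (E ρ l).1, k ≫ (E ρ l).2 = f := by
  induction l with
  | nil => exact ⟨f, Category.comp_id f⟩
  | cons γ l ih =>
    obtain ⟨k, hk⟩ := ih (fun γ' h' => h γ' (List.mem_cons_of_mem _ h'))
    have hcond : k ≫ (E ρ l).2 = k ≫ ((E ρ l).2 ≫ (ρ γ).hom) := by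
      rw [← Category.assoc, hk]
      exact (h γ (List.mem_cons_self)).symm
    refine ⟨equalizer.lift k hcond, ?_⟩
    show equalizer.lift k hcond ≫ equalizer.ι _ _ ≫ (E ρ l).2 = f
    rw [← Category.assoc, equalizer.lift_ι, hk]

lemma E_affine (l : List Γ) (hX : IsAffine X.left) : IsAffine (E ρ l).1.left := by
  induction l with
  | nil => exact hX
  | cons γ l ih =>
    haveI : IsAffine X.left := hX
    haveI : X.left.IsSeparated := inferInstance
    haveI : IsAffine (E ρ l).1.left := ih
    haveI : Scheme.IsSeparated ((𝟭 Scheme).obj X.left) := ‹X.left.IsSeparated›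
    haveI : IsSeparated X.hom := inferInstance
    haveI := isClosedImmersion_equalizer_ι_left (E ρ l).2 ((E ρ l).2 ≫ (ρ γ).hom)
    exact @isAffine_of_isAffineHom _ _ (equalizer.ι (E ρ l).2 ((E ρ l).2 ≫ (ρ γ).hom)).left
      (@IsClosedImmersion.instIsAffineHom _ _ _ this) ih

end Aux

/-- for a scheme `S`, an `S`-scheme `X`, and an action `ρ` of a finite group `Γ`
on `X` over `S`, the fixed-point functor `T ↦ {f : T ⟶ X | ∀ γ, ρ γ ∘ f = f}` is representable
by an `S`-scheme `Z`; moreover `Z` (may be chosen to be) affine whenever `X` is affine. -/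
theorem fixedFunctor_representable (S : Scheme) (X : Over S)
    (Γ : Type) [Group Γ] [Finite Γ] (ρ : Γ →* Aut X) :
    ∃ Z : Over S, Nonempty (yoneda.obj Z ≅ fixedFunctor ρ) ∧
      (IsAffine X.left → IsAffine Z.left) := by
  have : Fintype Γ := Fintype.ofFinite Γ
  set l : List Γ := (Finset.univ : Finset Γ).toList with hl
  have hmem : ∀ γ : Γ, γ ∈ l := fun γ => Finset.mem_toList.mpr (Finset.mem_univ γ)
  let eqv : ∀ T : (Over S)ᵒᵖ,
      (T.unop ⟶ (E ρ l).1) ≃ {f : T.unop ⟶ X // ∀ γ : Γ, f ≫ (ρ γ).hom = f} := fun T =>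
    { toFun := fun k => ⟨k ≫ (E ρ l).2, fun γ => by
        rw [Category.assoc, E_fixed ρ l γ (hmem γ)]⟩
      invFun := fun f => (E_lift ρ l f.1 (fun γ _ => f.2 γ)).choose
      left_inv := fun k => by
        haveI := E_mono ρ l
        apply (cancel_mono (E ρ l).2).mp
        exact (E_lift ρ l (k ≫ (E ρ l).2)
          (fun γ _ => by rw [Category.assoc, E_fixed ρ l γ (hmem γ)])).choose_spec
      right_inv := fun f => Subtype.ext (E_lift ρ l f.1 (fun γ _ => f.2 γ)).choose_spec }
  refine ⟨(E ρ l).1, ⟨NatIso.ofComponents (fun T => Equiv.toIso (X := (T.unop ⟶ (E ρ l).1)) (eqv T)) ?_⟩, E_affine ρ l⟩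
  intro T T' h
  ext k
  refine Subtype.ext ?_
  simp [eqv, fixedFunctor]
end

section
/- Let Γ be a finite group, S a scheme, and G a group scheme over S equipped with a Γ-action by group-scheme automorphisms over S (so that Γ acts on the group G(T) = Hom_S(T, G) functorially in the S-scheme T). Then the 1-cocycle functor Z¹_{Γ,G}, sending an S-scheme T to the set of maps φ : Γ → G(T) satisfying φ(στ) = φ(σ)·(σ·φ(τ)) for all σ, τ ∈ Γ, is representable by an S-scheme Z¹_{Γ,G}. If moreover G is affine then Z¹_{Γ,G} is affine. In addition, there are S-morphisms c_γ : Z¹_{Γ,G} → G for each γ ∈ Γ such that for every S-scheme T, every morphism φ' : T → Z¹_{Γ,G}, and the 1-cocycle φ ∈ Z¹_{Γ,G}(T) corresponding to φ' under representability, one has c_γ ∘ φ' = φ(γ). -/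
open CategoryTheory CategoryTheory.Limits AlgebraicGeometry Opposite

universe u

namespace CocycleRepAux

variable {S : Scheme.{u}} {G : Over S} {grpH : (Over S)ᵒᵖ ⥤ GrpCat.{u}}
  (iso : grpH ⋙ forget GrpCat ≅ yoneda.obj G)

/-- the bijection from group elements to morphisms -/
noncomputable def toHom {T : Over S} (x : grpH.obj (op T)) : T ⟶ G := iso.hom.app (op T) x

/-- the inverse bijection -/
noncomputable def toGrp {T : Over S} (a : T ⟶ G) : grpH.obj (op T) := iso.inv.app (op T) a

lemma toGrp_toHom {T : Over S} (x : grpH.obj (op T)) : toGrp iso (toHom iso x) = x :=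
  iso.hom_inv_id_app_apply (op T) x

lemma toHom_toGrp {T : Over S} (a : T ⟶ G) : toHom iso (toGrp iso a) = a :=
  iso.inv_hom_id_app_apply (op T) a

lemma toHom_inj {T : Over S} {x y : grpH.obj (op T)} (h : toHom iso x = toHom iso y) :
    x = y := by
  rw [← toGrp_toHom iso x, h, toGrp_toHom]

lemma comp_toHom {T' T : Over S} (h : T' ⟶ T) (x : grpH.obj (op T)) :
    h ≫ toHom iso x = toHom iso (grpH.map h.op x) :=
  (iso.hom.naturality_apply h.op x).symm

lemma toGrp_comp {T' T : Over S} (h : T' ⟶ T) (a : T ⟶ G) :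
    toGrp iso (h ≫ a) = grpH.map h.op (toGrp iso a) :=
  iso.inv.naturality_apply h.op a

/-- multiplication of morphisms -/
noncomputable def mulHom {T : Over S} (a b : T ⟶ G) : T ⟶ G :=
  toHom iso (toGrp iso a * toGrp iso b)

variable {Γ : Type} [Group Γ] (ρ : Γ →* Aut grpH)

/-- action of `Γ` on morphisms -/
noncomputable def actHom (σ : Γ) {T : Over S} (a : T ⟶ G) : T ⟶ G :=
  toHom iso ((ρ σ).hom.app (op T) (toGrp iso a))

lemma comp_mulHom {T' T : Over S} (h : T' ⟶ T) (a b : T ⟶ G) :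
    h ≫ mulHom iso a b = mulHom iso (h ≫ a) (h ≫ b) := by
  rw [mulHom, comp_toHom, map_mul, mulHom, toGrp_comp, toGrp_comp]

lemma comp_actHom {T' T : Over S} (h : T' ⟶ T) (σ : Γ) (a : T ⟶ G) :
    h ≫ actHom iso ρ σ a = actHom iso ρ σ (h ≫ a) := by
  rw [actHom, comp_toHom, actHom, toGrp_comp]
  congr 1
  have h1 := ConcreteCategory.congr_hom ((ρ σ).hom.naturality h.op) (toGrp iso a)
  simp only [comp_apply] at h1
  exact h1.symm

lemma mulHom_toHom {T : Over S} (x y : grpH.obj (op T)) :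
    mulHom iso (toHom iso x) (toHom iso y) = toHom iso (x * y) := by
  rw [mulHom, toGrp_toHom, toGrp_toHom]

lemma actHom_toHom (σ : Γ) {T : Over S} (x : grpH.obj (op T)) :
    actHom iso ρ σ (toHom iso x) = toHom iso ((ρ σ).hom.app (op T) x) := by
  rw [actHom, toGrp_toHom]

end CocycleRepAux

section AffineAux

lemma isSeparated_hom_of_isSeparated {X Y : Scheme.{u}} (f : X ⟶ Y) (hX : X.IsSeparated) :
    AlgebraicGeometry.IsSeparated f := by
  haveI := hX
  infer_instance

lemma isAffine_of_affineHom {X Y : Scheme.{u}} (f : X ⟶ Y) [IsAffineHom f] [IsAffine Y] :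
    IsAffine X :=
  isAffine_of_isAffineHom f

lemma isAffine_of_isLimit {J : Type} [SmallCategory J] {D : J ⥤ Scheme.{u}}
    (hD : ∀ j, IsAffine (D.obj j)) {c : Cone D} (hc : IsLimit c) : IsAffine c.pt := by
  haveI : PreservesLimitsOfSize.{0, 0} AffineScheme.forgetToScheme.{u} :=
    preservesLimitsOfSize_shrink.{0, u, 0, u} _
  let D' : J ⥤ AffineScheme.{u} :=
    ObjectProperty.lift _ D (fun j => essImage_Spec.2 (hD j))
  have hlim : IsLimit (AffineScheme.forgetToScheme.mapCone (limit.cone D')) :=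
    isLimitOfPreserves _ (limit.isLimit D')
  have : IsAffine (AffineScheme.forgetToScheme.mapCone (limit.cone D')).pt :=
    isAffine_affineScheme (limit D')
  exact IsAffine.of_isIso (hc.conePointUniqueUpToIso hlim).hom

lemma isAffine_pi {S : Scheme.{u}} [IsAffine S] {I : Type} [Finite I] (X : I → Over S)
    (h : ∀ i, IsAffine (X i).left) : IsAffine (∏ᶜ X).left := by
  classical
  haveI := Fintype.ofFinite I
  let F := Discrete.functor X
  have hL : IsLimit ((Over.ConstructProducts.conesEquiv S F).inverse.obj (limit.cone F)) :=
    IsLimit.ofPreservesConeTerminal _ (limit.isLimit F)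
  refine isAffine_of_isLimit ?_ hL
  rintro (_ | i)
  · exact ‹IsAffine S›
  · exact h i

end AffineAux

open CocycleRepAux

/-- let `Γ` be a finite group, `S` a scheme, and `G` a group scheme over `S`
(encoded as an `S`-scheme `G` together with a `Grp`-valued functor `grpH` on `S`-schemes and
an identification `iso` of its underlying set-valued functor with the functor of points of
`G`, so that each `G(T) = Hom_S(T, G)` is functorially a group), equipped with a `Γ`-action
by group-scheme automorphisms (a homomorphism `ρ` from `Γ` to the automorphisms of the
group-valued functor `grpH`).  Then the 1-cocycle functor
`T ↦ {φ : Γ → G(T) | φ (σ*τ) = φ σ * σ·(φ τ)}` is representable by an `S`-scheme `Z` (with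
universal 1-cocycle given by morphisms `c γ : Z ⟶ G`, so that a morphism `φ' : T ⟶ Z`
corresponds exactly to the 1-cocycle `γ ↦ φ' ≫ c γ`), which is affine whenever `G` is
affine. -/
theorem cocycle_functor_representable (S : Scheme) (Γ : Type) [Group Γ] [Finite Γ]
    (G : Over S) (grpH : (Over S)ᵒᵖ ⥤ GrpCat) (iso : grpH ⋙ forget GrpCat ≅ yoneda.obj G)
    (ρ : Γ →* Aut grpH) :
    ∃ (Z : Over S) (c : Γ → (Z ⟶ G)),
      (IsAffine G.left → IsAffine Z.left) ∧
      (∀ (T : Over S) (φ' : T ⟶ Z) (φ : Γ → grpH.obj (op T)),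
        (∀ γ : Γ, iso.hom.app (op T) (φ γ) = φ' ≫ c γ) →
          ∀ σ τ : Γ, φ (σ * τ) = φ σ * ((ρ σ).hom.app (op T)) (φ τ)) ∧
      (∀ (T : Over S) (φ : Γ → grpH.obj (op T)),
        (∀ σ τ : Γ, φ (σ * τ) = φ σ * ((ρ σ).hom.app (op T)) (φ τ)) →
          ∃! φ' : T ⟶ Z, ∀ γ : Γ, iso.hom.app (op T) (φ γ) = φ' ≫ c γ) := by
  classical
  haveI := Fintype.ofFinite Γ
  let P : Over S := ∏ᶜ (fun _ : Γ => G)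
  let Q : Over S := ∏ᶜ (fun _ : Γ × Γ => G)
  let f : P ⟶ Q := Pi.lift (fun p => Pi.π (fun _ : Γ => G) (p.1 * p.2))
  let g : P ⟶ Q := Pi.lift (fun p =>
    mulHom iso (Pi.π (fun _ : Γ => G) p.1) (actHom iso ρ p.1 (Pi.π (fun _ : Γ => G) p.2)))
  have hf : ∀ σ τ : Γ, f ≫ Pi.π (fun _ : Γ × Γ => G) (σ, τ) = Pi.π (fun _ : Γ => G) (σ * τ) := by
    intro σ τ; simp [f]
  have hg : ∀ σ τ : Γ, g ≫ Pi.π (fun _ : Γ × Γ => G) (σ, τ) =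
      mulHom iso (Pi.π (fun _ : Γ => G) σ) (actHom iso ρ σ (Pi.π (fun _ : Γ => G) τ)) := by
    intro σ τ; simp [g]
  refine ⟨equalizer f g, fun γ => equalizer.ι f g ≫ Pi.π _ γ, ?_, ?_, ?_⟩
  · -- affineness
    intro hG
    haveI : IsAffine G.left := hG
    let e : Over.mk (𝟙 S) ⟶ G := toHom iso 1
    haveI : IsClosedImmersion (e.left ≫ G.hom) := by
      rw [Over.w e]
      show IsClosedImmersion (𝟙 S)
      infer_instance
    haveI : IsClosedImmersion e.left := IsClosedImmersion.of_comp e.left G.hom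
    haveI : IsAffine S := isAffine_of_affineHom e.left
    haveI hP : IsAffine P.left := isAffine_pi _ (fun _ => hG)
    haveI hQ : IsAffine Q.left := isAffine_pi _ (fun _ => hG)
    haveI : IsSeparated Q.hom :=
      isSeparated_hom_of_isSeparated Q.hom (inferInstanceAs Q.left.IsSeparated)
    haveI : IsClosedImmersion (equalizer.ι f g).left :=
      AlgebraicGeometry.isClosedImmersion_equalizer_ι_left f g
    exact isAffine_of_affineHom (equalizer.ι f g).left
  · -- cocycle condition
    intro T φ' φ hφ σ τ
    have hφ' : ∀ γ : Γ, toHom iso (φ γ) = φ' ≫ equalizer.ι f g ≫ Pi.π (fun _ : Γ => G) γ :=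
      hφ
    apply toHom_inj iso
    have base : φ' ≫ equalizer.ι f g ≫ f ≫ Pi.π (fun _ : Γ × Γ => G) (σ, τ) =
        φ' ≫ equalizer.ι f g ≫ g ≫ Pi.π (fun _ : Γ × Γ => G) (σ, τ) := by
      calc φ' ≫ equalizer.ι f g ≫ f ≫ Pi.π (fun _ : Γ × Γ => G) (σ, τ)
          = φ' ≫ (equalizer.ι f g ≫ f) ≫ Pi.π (fun _ : Γ × Γ => G) (σ, τ) := by
            simp only [Category.assoc]
        _ = φ' ≫ (equalizer.ι f g ≫ g) ≫ Pi.π (fun _ : Γ × Γ => G) (σ, τ) := by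
            rw [equalizer.condition]
        _ = φ' ≫ equalizer.ι f g ≫ g ≫ Pi.π (fun _ : Γ × Γ => G) (σ, τ) := by
            simp only [Category.assoc]
    rw [hf σ τ, hg σ τ, comp_mulHom, comp_mulHom, comp_actHom, comp_actHom,
      ← hφ' σ, ← hφ' τ, ← hφ' (σ * τ), actHom_toHom, mulHom_toHom] at base
    exact base
  · -- representability
    intro T φ hcoc
    let l : T ⟶ P := Pi.lift (fun γ => toHom iso (φ γ))
    have hl : ∀ γ : Γ, l ≫ Pi.π (fun _ : Γ => G) γ = toHom iso (φ γ) := by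
      intro γ; simp [l]
    have hfg : l ≫ f = l ≫ g := by
      apply Pi.hom_ext
      rintro ⟨σ, τ⟩
      simp only [Category.assoc]
      rw [hf σ τ, hg σ τ, hl (σ * τ), comp_mulHom, comp_actHom, hl σ, hl τ,
        actHom_toHom, mulHom_toHom, hcoc σ τ]
    refine ⟨equalizer.lift l hfg, fun γ => ?_, fun ψ hψ => ?_⟩
    · show toHom iso (φ γ) = equalizer.lift l hfg ≫ equalizer.ι f g ≫ Pi.π (fun _ : Γ => G) γ
      rw [← Category.assoc, equalizer.lift_ι, hl]
    · have hψ' : ∀ γ : Γ, toHom iso (φ γ) = ψ ≫ equalizer.ι f g ≫ Pi.π (fun _ : Γ => G) γ :=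
        hψ
      have hψι : ψ ≫ equalizer.ι f g = l := by
        apply Pi.hom_ext
        intro γ
        rw [Category.assoc, ← hψ' γ, hl]
      rw [← cancel_mono (equalizer.ι f g), equalizer.lift_ι, hψι]
end

section
/- Let F be a field, Γ a finite group acting on a finite étale F-algebra E by F-algebra automorphisms with invariants E^Γ = F, and let E'/F be a field extension such that E ⊗_F E' ≅ (E')^m as E'-algebras, where m = dim_F E (for instance, E' a sufficiently large finite Galois extension of F). Then the action of Γ on the m-element set of F-algebra homomorphisms E → E', given by precomposition with the inverses of the automorphisms of E, is transitive. -/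
open scoped TensorProduct

/-- Every `K`-algebra homomorphism `K^n → K` is evaluation at some coordinate. -/
lemma pi_algHom_eq_eval {K : Type} [Field K] {n : ℕ} (q : (Fin n → K) →ₐ[K] K) :
    ∃ i, ∀ x, q x = x i := by
  classical
  have hsum : ∑ i : Fin n, q (Pi.single i 1) = 1 := by
    rw [← map_sum]
    have h1 : ∑ i : Fin n, Pi.single i (1 : K) = 1 := by
      ext j
      simp [Finset.sum_apply, Pi.single_apply]
    rw [h1, map_one]
  have hex : ∃ i, q (Pi.single i 1) ≠ 0 := by
    by_contra hc
    push_neg at hc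
    simp only [hc, Finset.sum_const_zero] at hsum
    exact one_ne_zero hsum.symm
  obtain ⟨i, hi⟩ := hex
  have hidem : q (Pi.single i 1) * q (Pi.single i 1) = q (Pi.single i 1) := by
    rw [← map_mul]
    congr 1
    ext j
    by_cases h : j = i <;> simp [Pi.single_apply, h]
  have hone : q (Pi.single i 1) = 1 := by
    nth_rewrite 3 [← mul_one (q (Pi.single i 1))] at hidem
    exact mul_left_cancel₀ hi hidem
  refine ⟨i, fun x => ?_⟩
  have hx : x * Pi.single i 1 = x i • (Pi.single i 1 : Fin n → K) := by
    ext j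
    by_cases h : j = i <;> simp [Pi.single_apply, h]
  have hq := congrArg q hx
  rw [map_mul, hone, mul_one, map_smul, hone, smul_eq_mul, mul_one] at hq
  exact hq

/-- An element of `E' ⊗[F] E` invariant under all `1 ⊗ ρ γ` is a scalar from `E'`,
provided the `Γ`-invariants of `E` are `F`. -/
lemma invariant_is_scalar (F E E' : Type) [Field F] [CommRing E] [Algebra F E]
    [Field E'] [Algebra F E']
    (Γ : Type) [Group Γ] (ρ : Γ →* (E ≃ₐ[F] E))
    (hinv : ∀ x : E, (∀ γ : Γ, ρ γ x = x) ↔ x ∈ (⊥ : Subalgebra F E))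
    (u : E' ⊗[F] E)
    (hu : ∀ γ : Γ, Algebra.TensorProduct.map (AlgHom.id E' E') (ρ γ).toAlgHom u = u) :
    ∃ y : E', algebraMap E' (E' ⊗[F] E) y = u := by
  classical
  set b := Module.Basis.ofVectorSpace F E' with hb
  set B := Algebra.TensorProduct.basis E b with hB
  set c : (E' ⊗[F] E) ≃ₐ[F] (E ⊗[F] E') := Algebra.TensorProduct.comm F E' E with hc
  have hcomm : ∀ (w : E' ⊗[F] E) (γ : Γ),
      Algebra.TensorProduct.map (ρ γ).toAlgHom (AlgHom.id F E') (c w)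
        = c (Algebra.TensorProduct.map (AlgHom.id E' E') (ρ γ).toAlgHom w) := by
    intro w γ
    induction w using TensorProduct.induction_on with
    | zero => simp
    | tmul y x => simp [hc, Algebra.TensorProduct.comm_tmul]
    | add w1 w2 h1 h2 => simp only [map_add, h1, h2]
  have hu' : ∀ γ : Γ,
      Algebra.TensorProduct.map (ρ γ).toAlgHom (AlgHom.id F E') (c u) = c u := by
    intro γ
    rw [hcomm, hu]
  have hrep : ∀ (γ : Γ) (w : E ⊗[F] E'), ∀ j,
      B.repr (Algebra.TensorProduct.map (ρ γ).toAlgHom (AlgHom.id F E') w) j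
        = ρ γ (B.repr w j) := by
    intro γ w
    induction w using TensorProduct.induction_on with
    | zero => intro j; simp
    | tmul x y =>
        intro j
        rw [Algebra.TensorProduct.map_tmul]
        rw [hB, Algebra.TensorProduct.basis_repr_tmul, Algebra.TensorProduct.basis_repr_tmul]
        simp [Finsupp.mapRange_apply, smul_eq_mul, map_mul, AlgEquiv.commutes]
    | add w1 w2 h1 h2 =>
        intro j
        simp only [map_add, Finsupp.add_apply, h1 j, h2 j]
  have hfix : ∀ j, B.repr (c u) j ∈ (⊥ : Subalgebra F E) := by
    intro j
    rw [← hinv]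
    intro γ
    rw [← hrep γ (c u) j, hu' γ]
  choose t ht using fun j => Algebra.mem_bot.mp (hfix j)
  refine ⟨∑ j ∈ (B.repr (c u)).support, t j • b j, ?_⟩
  have hcu : c u = (1 : E) ⊗ₜ[F] (∑ j ∈ (B.repr (c u)).support, t j • b j) := by
    conv_lhs => rw [← B.linearCombination_repr (c u)]
    rw [Finsupp.linearCombination_apply, Finsupp.sum, TensorProduct.tmul_sum]
    refine Finset.sum_congr rfl fun j hj => ?_
    rw [hB, Algebra.TensorProduct.basis_repr_symm_apply', ← ht j,
      Algebra.algebraMap_eq_smul_one, TensorProduct.smul_tmul]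
  have hu2 : u = c.symm ((1 : E) ⊗ₜ[F] (∑ j ∈ (B.repr (c u)).support, t j • b j)) := by
    rw [← hcu, AlgEquiv.symm_apply_apply]
  conv_rhs => rw [hu2]
  rw [hc, Algebra.TensorProduct.comm_symm_tmul, Algebra.TensorProduct.algebraMap_apply]
  simp

/-- let `Γ` be a finite group acting on a finite étale `F`-algebra `E` by
`F`-algebra automorphisms with invariants `E^Γ = F`, and let `E'/F` be a field extension
splitting `E`, i.e. `E ⊗_F E' ≅ E'^m` as `E'`-algebras where `m = dim_F E`.  Then the action
of `Γ` on the set of `F`-algebra homomorphisms `E → E'`, given by precomposition with the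
inverses of the automorphisms, is transitive. -/
theorem gamma_action_on_algHoms_transitive (F E E' : Type) [Field F] [CommRing E] [Algebra F E]
    [Module.Finite F E] [Algebra.Etale F E] [Field E'] [Algebra F E']
    (Γ : Type) [Group Γ] [Finite Γ] (ρ : Γ →* (E ≃ₐ[F] E))
    (hinv : ∀ x : E, (∀ γ : Γ, ρ γ x = x) ↔ x ∈ (⊥ : Subalgebra F E))
    (hsplit : Nonempty ((E' ⊗[F] E) ≃ₐ[E'] (Fin (Module.finrank F E) → E'))) :
    ∀ f g : E →ₐ[F] E', ∃ γ : Γ, f.comp (ρ γ).symm.toAlgHom = g := by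
  classical
  obtain ⟨ψ⟩ := hsplit
  intro f g
  by_contra hcon
  push_neg at hcon
  -- group computation lemmas
  have hgrp : ∀ (h : E →ₐ[F] E') (γ δ : Γ),
      (h.comp (ρ δ).symm.toAlgHom).comp (ρ γ).toAlgHom
        = h.comp (ρ (γ⁻¹ * δ)).symm.toAlgHom := by
    intro h γ δ
    ext x
    simp only [AlgHom.coe_comp, Function.comp_apply, AlgEquiv.toAlgHom_eq_coe,
      AlgHom.coe_coe]
    congr 1
    have h2 : ρ (γ⁻¹ * δ) ((ρ δ).symm (ρ γ x)) = x := by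
      rw [map_mul, map_inv, AlgEquiv.mul_apply]
      show (ρ γ).symm ((ρ δ) ((ρ δ).symm (ρ γ x))) = x
      rw [AlgEquiv.apply_symm_apply, AlgEquiv.symm_apply_apply]
    calc (ρ δ).symm (ρ γ x)
        = (ρ (γ⁻¹ * δ)).symm (ρ (γ⁻¹ * δ) ((ρ δ).symm (ρ γ x))) :=
          (AlgEquiv.symm_apply_apply _ _).symm
      _ = (ρ (γ⁻¹ * δ)).symm x := by rw [h2]
  have hone : ∀ h : E →ₐ[F] E', h.comp (ρ (1 : Γ)).symm.toAlgHom = h := by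
    intro h
    ext x
    simp only [AlgHom.coe_comp, Function.comp_apply, AlgEquiv.toAlgHom_eq_coe,
      AlgHom.coe_coe, map_one]
    rfl
  have hcancel : ∀ (h : E →ₐ[F] E') (γ : Γ),
      (h.comp (ρ γ).toAlgHom).comp (ρ γ⁻¹).toAlgHom = h := by
    intro h γ
    ext x
    simp only [AlgHom.coe_comp, Function.comp_apply, AlgEquiv.toAlgHom_eq_coe,
      AlgHom.coe_coe, map_inv]
    congr 1
    show (ρ γ) ((ρ γ).symm x) = x
    exact AlgEquiv.apply_symm_apply _ _
  -- f is not in the orbit of g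
  have hfS : ∀ δ : Γ, g.comp (ρ δ).symm.toAlgHom ≠ f := by
    intro δ hδ
    apply hcon δ⁻¹
    have hsym : (ρ δ⁻¹).symm.toAlgHom = (ρ δ).toAlgHom := by
      rw [map_inv]
      rfl
    rw [hsym, ← hδ, hgrp, inv_mul_cancel, hone]
  -- the morphism `E' ⊗ E → E'` attached to an F-algebra hom `E → E'`
  set bar : (E →ₐ[F] E') → ((E' ⊗[F] E) →ₐ[E'] E') :=
    fun h => Algebra.TensorProduct.lift (AlgHom.id E' E') h (fun _ _ => Commute.all _ _)
    with hbar
  have bar_tmul : ∀ (h : E →ₐ[F] E') (y : E') (x : E),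
      bar h (y ⊗ₜ[F] x) = y * h x := by
    intro h y x
    rw [hbar]
    simp [Algebra.TensorProduct.lift_tmul]
  have bar_surj : ∀ q : (E' ⊗[F] E) →ₐ[E'] E', ∃ h, ∀ a, bar h a = q a := by
    intro q
    refine ⟨(q.restrictScalars F).comp Algebra.TensorProduct.includeRight, fun a => ?_⟩
    induction a using TensorProduct.induction_on with
    | zero => simp
    | tmul y x =>
        rw [bar_tmul]
        simp only [AlgHom.coe_comp, AlgHom.coe_restrictScalars', Function.comp_apply,
          Algebra.TensorProduct.includeRight_apply]
        have hyx : (y ⊗ₜ[F] x : E' ⊗[F] E) = y • ((1 : E') ⊗ₜ[F] x) := by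
          rw [TensorProduct.smul_tmul', smul_eq_mul, mul_one]
        rw [hyx, map_smul, smul_eq_mul]
    | add a1 a2 h1 h2 => rw [map_add, map_add, h1, h2]
  have key : ∀ h : E →ₐ[F] E', ∃ i, ∀ a, bar h a = ψ a i := by
    intro h
    obtain ⟨i, hi⟩ := pi_algHom_eq_eval ((bar h).comp ψ.symm.toAlgHom)
    refine ⟨i, fun a => ?_⟩
    have := hi (ψ a)
    simpa using this
  choose idx hidx using key
  have idx_inj : ∀ h1 h2 : E →ₐ[F] E', idx h1 = idx h2 → h1 = h2 := by
    intro h1 h2 hEq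
    ext x
    have e1 := hidx h1 ((1 : E') ⊗ₜ[F] x)
    have e2 := hidx h2 ((1 : E') ⊗ₜ[F] x)
    rw [bar_tmul, one_mul] at e1 e2
    rw [e1, hEq, ← e2]
  have idx_surj : ∀ i, ∃ h, idx h = i := by
    intro i
    obtain ⟨h, hh⟩ := bar_surj ((Pi.evalAlgHom E' (fun _ => E') i).comp ψ.toAlgHom)
    refine ⟨h, ?_⟩
    have h1 := hidx h (ψ.symm (Pi.single i 1))
    rw [hh] at h1
    simp only [AlgHom.coe_comp, Function.comp_apply, AlgEquiv.toAlgHom_eq_coe, AlgHom.coe_coe,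
      AlgEquiv.apply_symm_apply, Pi.evalAlgHom_apply] at h1
    by_contra hne
    rw [AlgEquiv.coe_algHom, AlgEquiv.apply_symm_apply, Pi.single_eq_same, Pi.single_apply,
      if_neg hne] at h1
    exact one_ne_zero h1
  have hcompat : ∀ (h : E →ₐ[F] E') (γ : Γ) (a : E' ⊗[F] E),
      bar h (Algebra.TensorProduct.map (AlgHom.id E' E') (ρ γ).toAlgHom a)
        = bar (h.comp (ρ γ).toAlgHom) a := by
    intro h γ a
    induction a using TensorProduct.induction_on with
    | zero => simp
    | tmul y x =>
        rw [Algebra.TensorProduct.map_tmul, bar_tmul, bar_tmul]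
        simp
    | add a1 a2 h1 h2 => rw [map_add, map_add, map_add, h1, h2]
  -- the invariant idempotent
  set v : Fin (Module.finrank F E) → E' :=
    fun i => if ∃ δ : Γ, idx (g.comp (ρ δ).symm.toAlgHom) = i then 1 else 0 with hv
  set u : E' ⊗[F] E := ψ.symm v with huv
  have hψu : ψ u = v := ψ.apply_symm_apply v
  have hinvu : ∀ γ : Γ, Algebra.TensorProduct.map (AlgHom.id E' E') (ρ γ).toAlgHom u = u := by
    intro γ
    apply ψ.injective
    funext i
    obtain ⟨h, hh⟩ := idx_surj i
    have e1 : ψ (Algebra.TensorProduct.map (AlgHom.id E' E') (ρ γ).toAlgHom u) i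
        = bar (h.comp (ρ γ).toAlgHom) u := by
      rw [← hcompat, ← hh]
      exact (hidx h _).symm
    rw [e1, hidx (h.comp (ρ γ).toAlgHom) u, hψu]
    show v (idx (h.comp (ρ γ).toAlgHom)) = v i
    by_cases hmem : ∃ δ : Γ, g.comp (ρ δ).symm.toAlgHom = h
    · obtain ⟨δ, hδ⟩ := hmem
      have m1 : v i = 1 := by
        rw [hv]
        exact if_pos ⟨δ, by rw [hδ, hh]⟩
      have m2 : v (idx (h.comp (ρ γ).toAlgHom)) = 1 := by
        rw [hv]
        exact if_pos ⟨γ⁻¹ * δ, by rw [← hgrp, hδ]⟩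
      rw [m1, m2]
    · have m1 : v i = 0 := by
        rw [hv]
        apply if_neg
        rintro ⟨δ, hδ⟩
        exact hmem ⟨δ, idx_inj _ _ (hδ.trans hh.symm)⟩
      have m2 : v (idx (h.comp (ρ γ).toAlgHom)) = 0 := by
        rw [hv]
        apply if_neg
        rintro ⟨δ, hδ⟩
        have heq := idx_inj _ _ hδ
        apply hmem
        refine ⟨γ * δ, ?_⟩
        have e := congrArg (fun k => k.comp (ρ γ⁻¹).toAlgHom) heq
        rw [hgrp, inv_inv, hcancel] at e
        exact e
      rw [m1, m2]
  obtain ⟨y, hy⟩ := invariant_is_scalar F E E' Γ ρ hinv u hinvu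
  have hconst : ∀ i, v i = y := by
    intro i
    rw [← hψu, ← hy, AlgEquiv.commutes]
    simp [Pi.algebraMap_apply]
  have h1 : v (idx g) = 1 := by
    rw [hv]
    exact if_pos ⟨1, by rw [hone g]⟩
  have h0 : v (idx f) = 0 := by
    rw [hv]
    apply if_neg
    rintro ⟨δ, hδ⟩
    exact hfS δ (idx_inj _ _ hδ)
  rw [hconst (idx g)] at h1
  rw [hconst (idx f)] at h0
  exact one_ne_zero (h1.symm.trans h0)
end
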